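/- If û(ζ, t₁) ≠ 0 for some frequency ζ and times 0 < t₁ < t₂, then (2π)^{d/2}/(t₂-t₁) · log|û(ζ,t₂)/û(ζ,t₁)| = -∑_{|α| even, |α|≤n} c_α ζ^α, where c_α = p_α i^{|α|} ∈ ℝ for even |α|. That is, the modulus ratio of Fourier modes at two times determines the value of the real polynomial formed by the even-order coefficients at ζ. -/

import Mathlib

open Finset

/-- The finite set of multi-indices `α : Fin d → ℕ` with `|α| = ∑ α i ≤ n`. -/
def multiIdx (d n : ℕ) : Finset (Fin d → ℕ) :=
  (Fintype.piFinset fun _ => Finset.range (n + 1)).filter fun α => ∑ i, α i ≤ n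

/-- The symbol `(2π)^{-d/2} ∑_{|α| ≤ n} p_α (iζ)^α`. -/
noncomputable def pdeSymbol (d n : ℕ) (p : (Fin d → ℕ) → ℝ) (ζ : Fin d → ℝ) : ℂ :=
  (((2 * Real.pi) ^ (-(d : ℝ) / 2) : ℝ) : ℂ) *
    ∑ α ∈ multiIdx d n, (p α : ℂ) * ∏ i, (Complex.I * (ζ i : ℂ)) ^ (α i)

lemma term_re (r c : ℝ) (k : ℕ) :
    ((r : ℂ) * (Complex.I ^ k * (c : ℂ))).re
      = if Even k then r * (-1 : ℝ) ^ (k / 2) * c else 0 := by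
  rcases Nat.even_or_odd k with ⟨m, hm⟩ | ⟨m, hm⟩
  · have : Complex.I ^ k = ((-1 : ℝ) ^ m : ℂ) := by
      subst hm
      rw [← two_mul, pow_mul, Complex.I_sq]
      push_cast; ring
    have hk : Even k := ⟨m, hm⟩
    have h2 : k / 2 = m := by omega
    rw [this, if_pos hk, h2,
      show ((r : ℂ) * ((((-1 : ℝ)) : ℂ) ^ m * (c : ℂ))) = ((r * (-1) ^ m * c : ℝ) : ℂ) by
        push_cast; ring,
      Complex.ofReal_re]
  · have : Complex.I ^ k = ((-1 : ℝ) ^ m : ℂ) * Complex.I := by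
      subst hm
      rw [pow_succ, pow_mul, Complex.I_sq]
      push_cast; ring
    have hk : ¬ Even k := by subst hm; simp [Nat.even_add_one, parity_simps]
    rw [this, if_neg hk,
      show (r : ℂ) * ((((-1 : ℝ)) : ℂ) ^ m * Complex.I * (c : ℂ))
          = ((r * (-1 : ℝ) ^ m * c : ℝ) : ℂ) * Complex.I by push_cast; ring]
    simp [← Complex.ofReal_pow]

lemma symbol_re (d n : ℕ) (p : (Fin d → ℕ) → ℝ) (ζ : Fin d → ℝ) :
    (pdeSymbol d n p ζ).re = (2 * Real.pi) ^ (-(d : ℝ) / 2) *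
      ∑ α ∈ (multiIdx d n).filter (fun α => Even (∑ i, α i)),
          (p α * (-1 : ℝ) ^ ((∑ i, α i) / 2)) * ∏ i, (ζ i) ^ (α i) := by
  rw [pdeSymbol, Complex.re_ofReal_mul]
  congr 1
  rw [Complex.re_sum, Finset.sum_filter]
  apply Finset.sum_congr rfl
  intro α _
  have hprod : ∏ i, (Complex.I * (ζ i : ℂ)) ^ (α i)
      = Complex.I ^ (∑ i, α i) * ((∏ i, (ζ i) ^ (α i) : ℝ) : ℂ) := by
    push_cast
    rw [← Finset.prod_pow_eq_pow_sum, ← Finset.prod_mul_distrib]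
    exact Finset.prod_congr rfl fun i _ => (mul_pow _ _ _)
  rw [hprod, term_re]

/-- if `û(ζ,t) = û(ζ,0) exp(-(2π)^{-d/2} ∑ p_α (iζ)^α t)` and `û(ζ,t₁) ≠ 0`
for `0 < t₁ < t₂`, then
`(2π)^{d/2}/(t₂-t₁) · log|û(ζ,t₂)/û(ζ,t₁)| = -∑_{|α| even} c_α ζ^α`
with `c_α = p_α i^{|α|} = p_α (-1)^{|α|/2} ∈ ℝ`. -/
theorem stmt1 (d n : ℕ) (p : (Fin d → ℕ) → ℝ) (ζ : Fin d → ℝ)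
    (v : ℝ → ℂ)
    (hv : ∀ t : ℝ, v t = v 0 * Complex.exp (-(pdeSymbol d n p ζ) * t))
    (t₁ t₂ : ℝ) (h1 : 0 < t₁) (h12 : t₁ < t₂) (hne : v t₁ ≠ 0) :
    (2 * Real.pi) ^ ((d : ℝ) / 2) / (t₂ - t₁) *
        Real.log (‖v t₂ / v t₁‖)
      = -∑ α ∈ (multiIdx d n).filter (fun α => Even (∑ i, α i)),
          (p α * (-1 : ℝ) ^ ((∑ i, α i) / 2)) * ∏ i, (ζ i) ^ (α i) := by
  set S := pdeSymbol d n p ζ with hS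
  have hv0 : v 0 ≠ 0 := by
    intro h; apply hne; rw [hv t₁, h, zero_mul]
  have hratio : v t₂ / v t₁ = Complex.exp (-S * (↑(t₂ - t₁))) := by
    rw [hv t₂, hv t₁, mul_div_mul_left _ _ hv0, ← Complex.exp_sub]
    congr 1
    push_cast
    ring
  have ht : t₂ - t₁ ≠ 0 := by linarith
  rw [hratio, Complex.norm_exp, Real.log_exp]
  have hre : (-S * (↑(t₂ - t₁) : ℂ)).re = -S.re * (t₂ - t₁) := by
    rw [mul_comm, Complex.re_ofReal_mul, Complex.neg_re]
    ring
  rw [hre]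
  have : (2 * Real.pi) ^ ((d : ℝ) / 2) / (t₂ - t₁) * (-S.re * (t₂ - t₁))
      = (2 * Real.pi) ^ ((d : ℝ) / 2) * (-S.re) := by
    field_simp
  rw [this, symbol_re]
  have hpos : (0 : ℝ) < 2 * Real.pi := by positivity
  have hAB : (2 * Real.pi) ^ ((d : ℝ) / 2) * (2 * Real.pi) ^ (-(d : ℝ) / 2) = 1 := by
    rw [← Real.rpow_add hpos, show (d : ℝ) / 2 + -(d : ℝ) / 2 = 0 by ring, Real.rpow_zero]
  rw [mul_neg, ← mul_assoc, hAB, one_mul]
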